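/- Let π and σ be permutations with disjoint domains and lengths m and n. Then Σ_{τ ∈ π ⧢ σ} q^{maj(τ)} = q^{maj(π)+maj(σ)} · [m+n choose m]_q. -/
import Mathlib


/-- The descent set of a word: positions `i` (1-based) with `τ_i > τ_{i+1}`. -/
def Des (τ : List ℕ) : Finset ℕ :=
  (Finset.Ico 1 τ.length).filter (fun i => τ.getD i 0 < τ.getD (i-1) 0)

/-- The major index. -/
def maj (τ : List ℕ) : ℕ := ∑ i ∈ Des τ, i

/-- The descent number. -/
def des (τ : List ℕ) : ℕ := (Des τ).card

/-- The ascent set. -/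
def Asc (τ : List ℕ) : Finset ℕ :=
  (Finset.Ico 1 τ.length).filter (fun i => τ.getD (i-1) 0 < τ.getD i 0)

/-- The peak set: positions `i` (1-based, `2 ≤ i ≤ |τ|-1`) with `τ_{i-1} < τ_i > τ_{i+1}`. -/
def Pk (τ : List ℕ) : Finset ℕ :=
  (Finset.Ico 2 τ.length).filter
    (fun i => τ.getD (i-2) 0 < τ.getD (i-1) 0 ∧ τ.getD i 0 < τ.getD (i-1) 0)

/-- The valley set. -/
def Val (τ : List ℕ) : Finset ℕ :=
  (Finset.Ico 2 τ.length).filter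
    (fun i => τ.getD (i-1) 0 < τ.getD (i-2) 0 ∧ τ.getD (i-1) 0 < τ.getD i 0)

/-- The left peak set: peaks of `0τ`, recorded as positions of `τ`. -/
def Lpk (τ : List ℕ) : Finset ℕ := (Pk (0 :: τ)).image (· - 1)

/-- The right peak set: peaks of `τ0`. -/
def Rpk (τ : List ℕ) : Finset ℕ := Pk (τ ++ [0])

/-- The exterior peak set: peaks of `0τ0`, recorded as positions of `τ`. -/
def Epk (τ : List ℕ) : Finset ℕ := (Pk (0 :: (τ ++ [0]))).image (· - 1)

def pk (τ : List ℕ) : ℕ := (Pk τ).card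
def lpk (τ : List ℕ) : ℕ := (Lpk τ).card

/-- The number of updown runs (maximal monotone factors of `0τ`): for a nonempty
word with distinct letters this is one more than the number of interior
direction changes (peaks and valleys) of `0τ`. -/
def udr (τ : List ℕ) : ℕ :=
  if τ = [] then 0 else 1 + (Pk (0 :: τ) ∪ Val (0 :: τ)).card

/-- A permutation: a sequence of distinct positive integers. -/
def IsPerm (π : List ℕ) : Prop := π.Nodup ∧ ∀ x ∈ π, 0 < x

/-- The list of all shuffles (interleavings) of two words. -/
def shuffles : List ℕ → List ℕ → List (List ℕ)
  | [], σ => [σ]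
  | π, [] => [π]
  | a :: π, b :: σ =>
      ((shuffles π (b :: σ)).map (a :: ·)) ++ ((shuffles (a :: π) σ).map (b :: ·))
  termination_by π σ => π.length + σ.length

/-- A permutation statistic `St` is shuffle compatible if the multiset
distribution of `St` over the shuffles of `π` and `σ` depends only on
`St π`, `St σ` and the lengths. -/
def ShuffleCompatible {α : Type} (St : List ℕ → α) : Prop :=
  ∀ π π' σ σ' : List ℕ, IsPerm π → IsPerm π' → IsPerm σ → IsPerm σ' →
    π.length = π'.length → σ.length = σ'.length →
    π.Disjoint σ → π'.Disjoint σ' →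
    St π = St π' → St σ = St σ' →
    (((shuffles π σ).map St : List α) : Multiset α) = ((shuffles π' σ').map St : List α)

/-- A descent statistic: a statistic depending only on the descent set and length. -/
def IsDescentStat {α : Type} (St : List ℕ → α) : Prop :=
  ∀ π π' : List ℕ, IsPerm π → IsPerm π' → π.length = π'.length →
    Des π = Des π' → St π = St π'

/-- Standardization: replace each entry by its rank. -/
def std (π : List ℕ) : List ℕ := π.map (fun x => (π.filter (· ≤ x)).length)

/-- The Gaussian (q-)binomial coefficient, via the q-Pascal recursion
`[n+1, k+1]_q = [n, k]_q + q^(k+1) [n, k+1]_q`. -/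
noncomputable def qBinom : ℕ → ℕ → Polynomial ℤ
  | _, 0 => 1
  | 0, _ + 1 => 0
  | n + 1, k + 1 => qBinom n k + Polynomial.X ^ (k + 1) * qBinom n (k + 1)


open Polynomial

lemma qBinom_zero (n : ℕ) : qBinom n 0 = 1 := by cases n <;> simp [qBinom]

lemma qBinom_succ (n k : ℕ) : qBinom (n+1) (k+1) = qBinom n k + X ^ (k+1) * qBinom n (k+1) := by
  simp [qBinom]

lemma qBinom_of_lt : ∀ n k, n < k → qBinom n k = 0 := by
  intro n
  induction n with
  | zero => intro k hk; cases k; · omega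
            · simp [qBinom]
  | succ n ih =>
    intro k hk
    cases k with
    | zero => omega
    | succ k => rw [qBinom_succ, ih k (by omega), ih (k+1) (by omega)]; ring

lemma qBinom_self : ∀ n, qBinom n n = 1 := by
  intro n
  induction n with
  | zero => simp [qBinom]
  | succ n ih => rw [qBinom_succ, ih, qBinom_of_lt n (n+1) (by omega)]; ring

lemma qBinom_pascal2 : ∀ j k, qBinom (k+j+1) (k+1)
    = X ^ j * qBinom (k+j) k + qBinom (k+j) (k+1) := by
  intro j
  induction j with
  | zero =>
    intro k
    simp only [Nat.add_zero, qBinom_self, pow_zero, one_mul,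
      qBinom_of_lt k (k+1) (by omega)]
    ring
  | succ j ihj =>
    intro k
    induction k with
    | zero =>
      have g1 := qBinom_succ (j+1) 0
      have g2 := qBinom_succ j 0
      have ihj0 := ihj 0
      simp only [qBinom_zero, Nat.zero_add, pow_one] at g1 g2 ihj0 ⊢
      linear_combination g1 - g2 + X * ihj0
    | succ k ihk =>
      have e0 : qBinom (k+j+3) (k+2) = qBinom (k+j+2) (k+1) + X^(k+2) * qBinom (k+j+2) (k+2) :=
        qBinom_succ (k+j+2) (k+1)
      have e1' : qBinom (k+j+2) (k+1) = qBinom (k+j+1) k + X^(k+1) * qBinom (k+j+1) (k+1) :=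
        qBinom_succ (k+j+1) k
      have e2' : qBinom (k+j+2) (k+2) = qBinom (k+j+1) (k+1) + X^(k+2) * qBinom (k+j+1) (k+2) :=
        qBinom_succ (k+j+1) (k+1)
      have h1 := ihk
      rw [show k+(j+1)+1 = k+j+2 by omega, show k+(j+1) = k+j+1 by omega] at h1
      have h2 := ihj (k+1)
      rw [show k+1+j+1 = k+j+2 by omega, show k+1+j = k+j+1 by omega] at h2
      rw [show k+1+(j+1)+1 = k+j+3 by omega, show k+1+(j+1) = k+j+2 by omega,
        show k+1+1 = k+2 by omega]
      linear_combination e0 + h1 - X^(j+1) * e1' + X^(k+2) * h2 - e2'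

lemma maj_append (w : List ℕ) (c : ℕ) :
    maj (w ++ [c]) = maj w + if c < w.getLastD c then w.length else 0 := by
  rcases List.eq_nil_or_concat w with rfl | ⟨v, b, rfl⟩
  · simp [maj, Des]
  · rw [List.concat_eq_append]
    set w := v ++ [b] with hw
    have hL : w.length = v.length + 1 := by simp [hw]
    have h1L : 1 ≤ w.length := by omega
    have hlast : w.getLastD c = b := by simp [hw]
    rw [hlast]
    unfold maj Des
    rw [List.length_append, List.length_singleton]
    rw [Finset.sum_filter, Finset.sum_filter]
    rw [Finset.sum_Ico_succ_top h1L]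
    congr 1
    · apply Finset.sum_congr rfl
      intro i hi
      rw [Finset.mem_Ico] at hi
      rw [List.getD_append w [c] 0 i (by omega), List.getD_append w [c] 0 (i-1) (by omega)]
    · have e1 : (w ++ [c]).getD w.length 0 = c := by
        rw [List.getD_append_right _ _ _ _ (le_refl _)]
        simp
      have e2 : (w ++ [c]).getD (w.length - 1) 0 = b := by
        rw [List.getD_append w [c] 0 _ (by omega), hL]
        simp only [Nat.add_sub_cancel, hw]
        rw [List.getD_append_right v [b] 0 _ (le_refl _)]
        simp
      rw [e1, e2]

lemma shuffles_nil_left (σ : List ℕ) : shuffles [] σ = [σ] := by simp [shuffles]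
lemma shuffles_nil_right (π : List ℕ) : shuffles π [] = [π] := by
  cases π <;> simp [shuffles]
lemma shuffles_cons_cons (a b : ℕ) (π σ : List ℕ) :
    shuffles (a::π) (b::σ)
      = ((shuffles π (b :: σ)).map (a :: ·)) ++ ((shuffles (a :: π) σ).map (b :: ·)) := by
  simp [shuffles]

lemma perm_of_mem_shuffles : ∀ N (π σ τ : List ℕ), π.length + σ.length ≤ N →
    τ ∈ shuffles π σ → τ.Perm (π ++ σ) := by
  intro N
  induction N with
  | zero =>
    intro π σ τ h hm
    have h1 : π = [] := List.length_eq_zero_iff.1 (by omega)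
    have h2 : σ = [] := List.length_eq_zero_iff.1 (by omega)
    subst h1; subst h2
    simp_all [shuffles_nil_left]
  | succ N ih =>
    intro π σ τ h hm
    match π, σ with
    | [], σ => simp_all [shuffles_nil_left]
    | a::π, [] => simp_all [shuffles_nil_right]
    | a::π, b::σ =>
      rw [shuffles_cons_cons] at hm
      rw [List.mem_append] at hm
      rcases hm with hm | hm <;> rw [List.mem_map] at hm <;> obtain ⟨ρ, hρ, rfl⟩ := hm
      · have := ih π (b::σ) ρ (by simp at h ⊢; omega) hρ
        exact (this.cons a)
      · have h2 := ih (a::π) σ ρ (by simp at h ⊢; omega) hρ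
        refine (h2.cons b).trans ?_
        refine (List.Perm.swap a b _).trans ?_
        exact (List.perm_middle.symm.cons a)

lemma coe_app (l1 l2 : List (List ℕ)) : (↑(l1 ++ l2) : Multiset (List ℕ)) = ↑l1 + ↑l2 :=
  (Multiset.coe_add _ _).symm

lemma coe_mapp (f : List ℕ → List ℕ) (l : List (List ℕ)) :
    (↑(List.map f l) : Multiset (List ℕ)) = Multiset.map f ↑l :=
  (Multiset.map_coe _ _).symm

lemma shuffles_concat : ∀ N (π σ : List ℕ) (a b : ℕ), π.length + σ.length ≤ N →
    (↑(shuffles (π++[a]) (σ++[b])) : Multiset (List ℕ))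
      = ↑((shuffles π (σ++[b])).map (· ++ [a])) + ↑((shuffles (π++[a]) σ).map (· ++ [b])) := by
  intro N
  induction N with
  | zero =>
    intro π σ a b h
    have h1 : π = [] := List.length_eq_zero_iff.1 (by omega)
    have h2 : σ = [] := List.length_eq_zero_iff.1 (by omega)
    subst h1; subst h2
    simp only [List.nil_append, shuffles_nil_left, shuffles_nil_right,
      shuffles_cons_cons, List.map_nil, List.map_cons, List.append_nil, List.singleton_append]
    exact Multiset.coe_eq_coe.2 (List.Perm.swap _ _ _)
  | succ N ih =>
    intro π σ a b h
    match π, σ with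
    | [], [] =>
      simp only [List.nil_append, shuffles_nil_left, shuffles_nil_right,
        shuffles_cons_cons, List.map_nil, List.map_cons, List.append_nil, List.singleton_append]
      exact Multiset.coe_eq_coe.2 (List.Perm.swap _ _ _)
    | [], c::σ' =>
      have ihs := ih [] σ' a b (by simp at h ⊢; omega)
      rw [List.nil_append] at ihs ⊢
      rw [show (c::σ')++[b] = c::(σ'++[b]) from rfl]
      rw [shuffles_cons_cons a c [] (σ'++[b]), shuffles_nil_left,
        shuffles_cons_cons a c [] σ', shuffles_nil_left]
      simp only [coe_app, coe_mapp, List.map_cons, List.map_nil, shuffles_nil_left,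
        Multiset.map_map, ihs, Multiset.map_add]
      simp only [Function.comp, List.cons_append, List.append_assoc, List.singleton_append,
        List.nil_append, Multiset.map_coe, List.map_cons, List.map_nil]
      rw [Multiset.coe_add, Multiset.coe_add]
      exact Multiset.coe_eq_coe.2 (List.Perm.swap _ _ _)
    | c::π', [] =>
      have ihs := ih π' [] a b (by simp at h ⊢; omega)
      rw [List.nil_append] at ihs ⊢
      simp only [List.cons_append]
      rw [shuffles_cons_cons c b (π'++[a]) [], shuffles_nil_right,
        shuffles_cons_cons c b π' [], shuffles_nil_right]
      simp only [coe_app, coe_mapp, List.map_cons, List.map_nil, shuffles_nil_right,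
        Multiset.map_map, ihs, Multiset.map_add]
      simp only [Function.comp, List.cons_append, List.append_assoc, List.singleton_append,
        List.nil_append, Multiset.map_coe, List.map_cons, List.map_nil]
      abel
    | x::π', y::σ' =>
      have ih1 := ih π' (y::σ') a b (by simp at h ⊢; omega)
      have ih2 := ih (x::π') σ' a b (by simp at h ⊢; omega)
      simp only [List.cons_append] at ih1 ih2 ⊢
      rw [shuffles_cons_cons x y (π'++[a]) (σ'++[b]),
        shuffles_cons_cons x y π' (σ'++[b]),
        shuffles_cons_cons x y (π'++[a]) σ']
      simp only [coe_app, coe_mapp, Multiset.map_map, ih1, ih2, Multiset.map_add]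
      simp only [Function.comp, List.cons_append, List.append_assoc, List.singleton_append,
        List.nil_append]
      abel

lemma maj_concat_concat (w : List ℕ) (x c : ℕ) :
    maj ((w ++ [x]) ++ [c]) = maj (w ++ [x]) + if c < x then w.length + 1 else 0 := by
  rw [maj_append (w ++ [x]) c, List.getLastD_concat, List.length_append, List.length_singleton]

lemma sum_map_const_mul (C : Polynomial ℤ) (f : List ℕ → Polynomial ℤ) (l : List (List ℕ)) :
    (l.map (fun ρ => C * f ρ)).sum = C * (l.map f).sum := by
  induction l with
  | nil => simp
  | cons x l ih => simp [ih, mul_add]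

lemma keyT : ∀ N (π σ : List ℕ) (c : ℕ), π.length + σ.length ≤ N →
    IsPerm π → IsPerm σ → π.Disjoint σ → c ∉ π → c ∉ σ →
    ((shuffles π σ).map (fun ρ => (X : Polynomial ℤ) ^ maj (ρ ++ [c]))).sum
      = X ^ (maj (π++[c]) + maj (σ++[c])) * qBinom (π.length + σ.length) π.length := by
  intro N
  induction N with
  | zero =>
    intro π σ c h _ _ _ _ _
    have h1 : π = [] := List.length_eq_zero_iff.1 (by omega)
    have h2 : σ = [] := List.length_eq_zero_iff.1 (by omega)
    subst h1; subst h2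
    simp [shuffles_nil_left, maj, Des, qBinom_zero]
  | succ N ih =>
    intro π σ c h hπ hσ hd hcπ hcσ
    rcases List.eq_nil_or_concat π with rfl | ⟨π₀, a, rfl⟩
    · simp only [shuffles_nil_left, List.map_cons, List.map_nil, List.sum_cons, List.sum_nil,
        add_zero, List.length_nil, Nat.zero_add, List.nil_append, qBinom_zero]
      have h0 : maj [c] = 0 := by simp [maj, Des]
      rw [h0]
      ring
    rcases List.eq_nil_or_concat σ with rfl | ⟨σ₀, b, rfl⟩
    · simp only [shuffles_nil_right, List.map_cons, List.map_nil, List.sum_cons, List.sum_nil,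
        add_zero, List.length_nil, Nat.add_zero, qBinom_self]
      have h0 : maj [c] = 0 := by simp [maj, Des]
      rw [List.nil_append, h0]
      ring
    simp only [List.concat_eq_append] at hπ hσ hd hcπ hcσ h ⊢
    -- letters and permutation facts
    have haπ₀ : a ∉ π₀ := fun hmem => (List.disjoint_of_nodup_append hπ.1) hmem (by simp)
    have hbσ₀ : b ∉ σ₀ := fun hmem => (List.disjoint_of_nodup_append hσ.1) hmem (by simp)
    have haσ : a ∉ σ₀ ++ [b] := fun hmem => hd (by simp : a ∈ π₀ ++ [a]) hmem
    have hbπ : b ∉ π₀ ++ [a] := fun hmem => hd hmem (by simp : b ∈ σ₀ ++ [b])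
    have hab : a ≠ b := fun he => haσ (by simp [he])
    have hca : c ≠ a := fun he => hcπ (by simp [he])
    have hcb : c ≠ b := fun he => hcσ (by simp [he])
    have hπ₀ : IsPerm π₀ :=
      ⟨(List.nodup_append.1 hπ.1).1, fun x hx => hπ.2 x (by simp [hx])⟩
    have hσ₀ : IsPerm σ₀ :=
      ⟨(List.nodup_append.1 hσ.1).1, fun x hx => hσ.2 x (by simp [hx])⟩
    have hd1 : π₀.Disjoint (σ₀ ++ [b]) := fun _ h1 h2 => hd (List.mem_append_left [a] h1) h2
    have hd2 : (π₀ ++ [a]).Disjoint σ₀ := fun _ h1 h2 => hd h1 (List.mem_append_left [b] h2)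
    obtain ⟨m, hm⟩ : ∃ m, π₀.length = m := ⟨_, rfl⟩
    obtain ⟨n, hn⟩ : ∃ n, σ₀.length = n := ⟨_, rfl⟩
    -- split the sum using shuffles_concat
    have hsplit := shuffles_concat (m + n) π₀ σ₀ a b (by omega)
    have lhs_eq : ((shuffles (π₀++[a]) (σ₀++[b])).map
          (fun ρ => (X : Polynomial ℤ) ^ maj (ρ ++ [c]))).sum
        = ((shuffles π₀ (σ₀++[b])).map (fun ρ => (X : Polynomial ℤ) ^ maj ((ρ ++ [a]) ++ [c]))).sum
          + ((shuffles (π₀++[a]) σ₀).map (fun ρ => (X : Polynomial ℤ) ^ maj ((ρ ++ [b]) ++ [c]))).sum := by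
      have e1 : ((shuffles (π₀++[a]) (σ₀++[b])).map
            (fun ρ => (X : Polynomial ℤ) ^ maj (ρ ++ [c]))).sum
          = (Multiset.map (fun ρ => (X : Polynomial ℤ) ^ maj (ρ ++ [c]))
              (↑(shuffles (π₀++[a]) (σ₀++[b])) : Multiset (List ℕ))).sum := by
        simp [Multiset.map_coe]
      rw [e1, hsplit]
      simp [Multiset.map_coe, List.map_map, Function.comp_def, List.append_assoc]
    rw [lhs_eq]
    -- part 1
    have hi1 := ih π₀ (σ₀++[b]) a (by simp at h ⊢; omega) hπ₀ hσ hd1 haπ₀ haσ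
    simp only [List.length_append, List.length_singleton, hm, hn] at hi1
    have part1 : ((shuffles π₀ (σ₀++[b])).map
          (fun ρ => (X : Polynomial ℤ) ^ maj ((ρ ++ [a]) ++ [c]))).sum
        = X ^ (if c < a then m+n+2 else 0) *
            (X ^ (maj (π₀++[a]) + maj ((σ₀++[b])++[a])) * qBinom (m+n+1) m) := by
      have e2 : ∀ ρ ∈ shuffles π₀ (σ₀++[b]),
          (X : Polynomial ℤ) ^ maj ((ρ ++ [a]) ++ [c])
            = X ^ (if c < a then m+n+2 else 0) * X ^ maj (ρ ++ [a]) := by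
        intro ρ hρ
        have hlρ : ρ.length = m + n + 1 := by
          have := (perm_of_mem_shuffles (m+n+1) π₀ (σ₀++[b]) ρ (by simp; omega) hρ).length_eq
          simp only [List.length_append, List.length_singleton, hm, hn] at this
          omega
        have hlρ' : ρ.length + 1 = m+n+2 := by omega
        rw [maj_concat_concat ρ a c, hlρ', pow_add, mul_comm]
      rw [List.map_congr_left e2, sum_map_const_mul, hi1,
        show m + (n+1) = m+n+1 by omega]
    -- part 2
    have hi2 := ih (π₀++[a]) σ₀ b (by simp at h ⊢; omega) hπ hσ₀ hd2 hbπ hbσ₀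
    simp only [List.length_append, List.length_singleton, hm, hn] at hi2
    have part2 : ((shuffles (π₀++[a]) σ₀).map
          (fun ρ => (X : Polynomial ℤ) ^ maj ((ρ ++ [b]) ++ [c]))).sum
        = X ^ (if c < b then m+n+2 else 0) *
            (X ^ (maj ((π₀++[a])++[b]) + maj (σ₀++[b])) * qBinom (m+n+1) (m+1)) := by
      have e2 : ∀ ρ ∈ shuffles (π₀++[a]) σ₀,
          (X : Polynomial ℤ) ^ maj ((ρ ++ [b]) ++ [c])
            = X ^ (if c < b then m+n+2 else 0) * X ^ maj (ρ ++ [b]) := by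
        intro ρ hρ
        have hlρ : ρ.length = m + n + 1 := by
          have := (perm_of_mem_shuffles (m+n+1) (π₀++[a]) σ₀ ρ (by simp; omega) hρ).length_eq
          simp only [List.length_append, List.length_singleton, hm, hn] at this
          omega
        have hlρ' : ρ.length + 1 = m+n+2 := by omega
        rw [maj_concat_concat ρ b c, hlρ', pow_add, mul_comm]
      rw [List.map_congr_left e2, sum_map_const_mul, hi2,
        show m + 1 + n = m+n+1 by omega]
    rw [part1, part2]
    -- maj bookkeeping
    have majπc : maj ((π₀++[a])++[c]) = maj (π₀++[a]) + if c < a then m+1 else 0 := by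
      rw [maj_concat_concat π₀ a c, hm]
    have majσc : maj ((σ₀++[b])++[c]) = maj (σ₀++[b]) + if c < b then n+1 else 0 := by
      rw [maj_concat_concat σ₀ b c, hn]
    have majσa : maj ((σ₀++[b])++[a]) = maj (σ₀++[b]) + if a < b then n+1 else 0 := by
      rw [maj_concat_concat σ₀ b a, hn]
    have majπb : maj ((π₀++[a])++[b]) = maj (π₀++[a]) + if b < a then m+1 else 0 := by
      rw [maj_concat_concat π₀ a b, hm]
    rw [majπc, majσc, majσa, majπb]
    simp only [List.length_append, List.length_singleton, hm, hn]
    rw [show m + 1 + (n+1) = m+n+2 by omega]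
    set P := maj (π₀ ++ [a]) with hP
    set S := maj (σ₀ ++ [b]) with hS
    have pascal1 : qBinom (m+n+2) (m+1)
        = qBinom (m+n+1) m + X^(m+1) * qBinom (m+n+1) (m+1) := by
      rw [show m+n+2 = (m+n+1)+1 by omega]; exact qBinom_succ (m+n+1) m
    have pascal2 : qBinom (m+n+2) (m+1)
        = X^(n+1) * qBinom (m+n+1) m + qBinom (m+n+1) (m+1) := by
      have h2 := qBinom_pascal2 (n+1) m
      rw [show m+(n+1)+1 = m+n+2 by omega, show m+(n+1) = m+n+1 by omega] at h2
      exact h2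
    rcases hca.lt_or_gt with h1 | h1 <;> rcases hcb.lt_or_gt with h2 | h2 <;>
      rcases hab.lt_or_gt with h3 | h3
    · -- c<a, c<b, a<b : pascal2
      rw [if_pos h1, if_pos h1, if_pos h2, if_pos h2, if_pos h3,
        if_neg (by omega : ¬ b < a), pascal2]
      ring
    · -- c<a, c<b, b<a : pascal1
      rw [if_pos h1, if_pos h1, if_pos h2, if_pos h2, if_neg (by omega : ¬ a < b),
        if_pos h3, pascal1]
      ring
    · -- c<a, b<c, a<b : impossible
      omega
    · -- c<a, b<c, b<a : pascal2
      rw [if_pos h1, if_pos h1, if_neg (by omega : ¬ c < b), if_neg (by omega : ¬ c < b),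
        if_neg (by omega : ¬ a < b), if_pos h3, pascal2]
      ring
    · -- a<c, c<b, a<b : pascal1
      rw [if_neg (by omega : ¬ c < a), if_neg (by omega : ¬ c < a), if_pos h2, if_pos h2,
        if_pos h3, if_neg (by omega : ¬ b < a), pascal1]
      ring
    · -- a<c, c<b, b<a : impossible
      omega
    · -- a<c, b<c, a<b : pascal2
      rw [if_neg (by omega : ¬ c < a), if_neg (by omega : ¬ c < a),
        if_neg (by omega : ¬ c < b), if_neg (by omega : ¬ c < b),
        if_pos h3, if_neg (by omega : ¬ b < a), pascal2]
      ring
    · -- a<c, b<c, b<a : pascal1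
      rw [if_neg (by omega : ¬ c < a), if_neg (by omega : ¬ c < a),
        if_neg (by omega : ¬ c < b), if_neg (by omega : ¬ c < b),
        if_neg (by omega : ¬ a < b), if_pos h3, pascal1]
      ring

lemma maj_append_big (w : List ℕ) (c : ℕ) (hbig : ∀ x ∈ w, x < c) :
    maj (w ++ [c]) = maj w := by
  rw [maj_append w c]
  rcases List.eq_nil_or_concat w with rfl | ⟨v, b, rfl⟩
  · simp
  · rw [List.concat_eq_append, List.getLastD_concat]
    have : b < c := hbig b (by simp)
    rw [if_neg (by omega)]
    exact Nat.add_zero _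

lemma lt_succ_foldr_max : ∀ (l : List ℕ) (x : ℕ), x ∈ l → x < l.foldr max 0 + 1 := by
  intro l
  induction l with
  | nil => simp
  | cons y l ih =>
    intro x hx
    rcases List.mem_cons.1 hx with rfl | hx
    · simp only [List.foldr_cons, Nat.lt_succ_iff]
      exact le_max_left _ _
    · have := ih x hx
      simp only [List.foldr_cons, Nat.lt_succ_iff] at this ⊢
      exact le_trans this (le_max_right _ _)

/-- The distribution of the major index over a shuffle set:
`Σ_{τ ∈ π ⧢ σ} q^(maj τ) = q^(maj π + maj σ) [m+n choose m]_q`. -/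
theorem stmt16 (π σ : List ℕ) (hπ : IsPerm π) (hσ : IsPerm σ) (hd : π.Disjoint σ) :
    ((shuffles π σ).map (fun τ => (Polynomial.X : Polynomial ℤ) ^ maj τ)).sum
      = Polynomial.X ^ (maj π + maj σ) * qBinom (π.length + σ.length) π.length := by
  set c := (π ++ σ).foldr max 0 + 1 with hc
  have hbig : ∀ x ∈ π ++ σ, x < c := fun x hx => lt_succ_foldr_max (π ++ σ) x hx
  have hcπ : c ∉ π := fun hmem => lt_irrefl c (hbig c (List.mem_append_left _ hmem))
  have hcσ : c ∉ σ := fun hmem => lt_irrefl c (hbig c (List.mem_append_right _ hmem))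
  have key := keyT (π.length + σ.length) π σ c le_rfl hπ hσ hd hcπ hcσ
  have e1 : ∀ ρ ∈ shuffles π σ,
      (Polynomial.X : Polynomial ℤ) ^ maj (ρ ++ [c]) = Polynomial.X ^ maj ρ := by
    intro ρ hρ
    have hperm := perm_of_mem_shuffles (π.length + σ.length) π σ ρ le_rfl hρ
    rw [maj_append_big ρ c (fun x hx => hbig x (hperm.mem_iff.1 hx))]
  rw [List.map_congr_left e1] at key
  rw [key, maj_append_big π c (fun x hx => hbig x (List.mem_append_left _ hx)),
    maj_append_big σ c (fun x hx => hbig x (List.mem_append_right _ hx))]
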